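/- Let λ ≥ 0, let X and X' be d×d positive definite Hermitian matrices and P a d×d positive semidefinite Hermitian matrix with P ⪰ X^{-1} and X'^{-1} ⪯ (1+λ) X^{-1}, and let P' := P + X'^{-1/2}(I_d − X'^{1/2} P X'^{1/2})_+ X'^{-1/2}. Then P' ⪯ (1+λ) P. -/

import Mathlib

open Matrix
open scoped ComplexOrder

/-- The positive part `M₊` of a Hermitian matrix: keep the spectral decomposition but set
all negative eigenvalues to zero (junk value `0` if `M` is not Hermitian). -/
noncomputable def matPosPart {d : ℕ} (M : Matrix (Fin d) (Fin d) ℂ) :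
    Matrix (Fin d) (Fin d) ℂ :=
  if hM : M.IsHermitian then
    (hM.eigenvectorUnitary : Matrix (Fin d) (Fin d) ℂ) *
      Matrix.diagonal (fun i => ((max (hM.eigenvalues i) 0 : ℝ) : ℂ)) *
      star (hM.eigenvectorUnitary : Matrix (Fin d) (Fin d) ℂ)
  else 0

private lemma psd_real_smul {d : ℕ} {A : Matrix (Fin d) (Fin d) ℂ} (hA : A.PosSemidef)
    {c : ℝ} (hc : 0 ≤ c) : (c • A).PosSemidef := by
  have h : c • A = (c : ℂ) • A := by
    ext i j; simp [Complex.real_smul]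
  rw [h]
  refine Matrix.PosSemidef.of_dotProduct_mulVec_nonneg ?_ ?_
  · have h1 : ((c:ℂ) • A)ᴴ = star (c:ℂ) • Aᴴ := conjTranspose_smul _ _
    rw [Matrix.IsHermitian, h1, hA.1.eq, Complex.star_def, Complex.conj_ofReal]
  · intro x
    rw [Matrix.smul_mulVec, dotProduct_smul, smul_eq_mul]
    exact mul_nonneg (by exact_mod_cast hc) (hA.dotProduct_mulVec_nonneg x)

/-- Let `λ ≥ 0`, let `X, X'` be PD Hermitian and `P` PSD Hermitian with
`P ⪰ X⁻¹` and `X'⁻¹ ⪯ (1+λ)X⁻¹`, and let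
`P' := P + X'^{-1/2}(I − X'^{1/2} P X'^{1/2})₊ X'^{-1/2}`. Then `P' ⪯ (1+λ)P`.
Here `S` denotes the (unique) PD square root `X'^{1/2}` of `X'`. -/
theorem stmt7 (d : ℕ) (lam : ℝ) (X X' P S P' : Matrix (Fin d) (Fin d) ℂ)
    (hlam : 0 ≤ lam)
    (hX : X.PosDef) (hX' : X'.PosDef) (hP : P.PosSemidef)
    (hPX : (P - X⁻¹).PosSemidef)
    (hXX' : ((1 + lam) • X⁻¹ - X'⁻¹).PosSemidef)
    (hS : S.PosDef) (hSX' : S * S = X')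
    (hP' : P' = P + S⁻¹ * matPosPart (1 - S * P * S) * S⁻¹) :
    ((1 + lam) • P - P').PosSemidef := by
  have hSH : S.IsHermitian := hS.1
  have hSinv : (S⁻¹).IsHermitian := hSH.inv
  have hSdet : IsUnit S.det := (Matrix.isUnit_iff_isUnit_det _).mp hS.isUnit
  have hSS : S⁻¹ * S = 1 := Matrix.nonsing_inv_mul _ hSdet
  have hSS' : S * S⁻¹ = 1 := Matrix.mul_nonsing_inv _ hSdet
  -- N = 1 - S P S is Hermitian
  set N : Matrix (Fin d) (Fin d) ℂ := 1 - S * P * S with hNdef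
  have hN : N.IsHermitian := by
    refine Matrix.isHermitian_one.sub ?_
    have h : (S * P * S)ᴴ = Sᴴ * Pᴴ * Sᴴ := by
      rw [conjTranspose_mul, conjTranspose_mul, mul_assoc]
    rw [Matrix.IsHermitian, h, hSH.eq, hP.1.eq]
  set U : Matrix (Fin d) (Fin d) ℂ := (hN.eigenvectorUnitary : Matrix (Fin d) (Fin d) ℂ)
    with hUdef
  set ev : Fin d → ℝ := hN.eigenvalues with hevdef
  have hUU : star U * U = 1 := (Matrix.mem_unitaryGroup_iff').mp hN.eigenvectorUnitary.2
  have hUU' : U * star U = 1 := (Matrix.mem_unitaryGroup_iff).mp hN.eigenvectorUnitary.2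
  set D : Matrix (Fin d) (Fin d) ℂ := diagonal (RCLike.ofReal ∘ ev) with hDdef
  set Dp : Matrix (Fin d) (Fin d) ℂ := diagonal (fun i => ((max (ev i) 0 : ℝ) : ℂ)) with hDpdef
  have hspec : N = U * D * star U := hN.spectral_theorem
  have hpos : matPosPart N = U * Dp * star U := by
    unfold matPosPart
    rw [dif_pos hN]
  have hSPS : S * P * S = 1 - N := by rw [hNdef]; abel
  have h1N : (1 : Matrix (Fin d) (Fin d) ℂ) - N = U * (1 - D) * star U := by
    have h : U * (1 - D) * star U = U * star U - U * D * star U := by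
      rw [Matrix.mul_sub, mul_one, Matrix.sub_mul]
    rw [h, hUU', ← hspec]
  -- key inequality: S P S ⪰ (1+lam)⁻¹ • 1
  have hlam1 : (0:ℝ) < 1 + lam := by linarith
  set c : ℝ := (1 + lam)⁻¹ with hcdef
  have hc : c * (1 + lam) = 1 := inv_mul_cancel₀ hlam1.ne'
  have hX'inv : S * X'⁻¹ * S = 1 := by
    rw [← hSX', Matrix.mul_inv_rev, mul_assoc, mul_assoc S⁻¹ S⁻¹ S, hSS, mul_one, hSS']
  have hkey : S * P * S - c • (1 : Matrix (Fin d) (Fin d) ℂ)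
      = S * (P - X⁻¹) * S + c • (S * ((1 + lam) • X⁻¹ - X'⁻¹) * S) := by
    rw [Matrix.mul_sub, Matrix.sub_mul, Matrix.mul_sub, Matrix.sub_mul,
      Matrix.mul_smul, Matrix.smul_mul, hX'inv, smul_sub, smul_smul, hc, one_smul]
    abel
  have hK : (S * P * S - c • (1 : Matrix (Fin d) (Fin d) ℂ)).PosSemidef := by
    rw [hkey]
    refine Matrix.PosSemidef.add ?_ (psd_real_smul ?_ (by positivity))
    · have h := hPX.mul_mul_conjTranspose_same S
      rwa [hSH.eq] at h
    · have h := hXX'.mul_mul_conjTranspose_same S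
      rwa [hSH.eq] at h
  -- conjugate by U to get eigenvalue bounds
  have hcancel : ∀ E : Matrix (Fin d) (Fin d) ℂ, star U * (U * E * star U) * U = E := by
    intro E
    have h : star U * (U * E * star U) * U = (star U * U) * E * (star U * U) := by
      noncomm_ring
    rw [h, hUU, one_mul, mul_one]
  have hd1 : (1 : Matrix (Fin d) (Fin d) ℂ) - D - c • 1
      = diagonal (fun i => ((1 - ev i - c : ℝ) : ℂ)) := by
    ext i j
    rcases eq_or_ne i j with rfl | h
    · simp [hDdef, Matrix.one_apply_eq, Complex.real_smul, Function.comp]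
      try push_cast
      try ring
    · simp [hDdef, Matrix.one_apply_ne h, Matrix.diagonal_apply_ne _ h]
  have hUKU : star U * (S * P * S - c • (1 : Matrix (Fin d) (Fin d) ℂ)) * U
      = diagonal (fun i => ((1 - ev i - c : ℝ) : ℂ)) := by
    have h : U * ((1 - D) - c • 1) * star U
        = (1 - N) - c • (1 : Matrix (Fin d) (Fin d) ℂ) := by
      rw [Matrix.mul_sub, Matrix.sub_mul, ← h1N, Matrix.mul_smul, Matrix.smul_mul,
        mul_one, hUU']
    rw [hSPS, ← h, hcancel]
    exact hd1
  have hev : ∀ i, ev i ≤ 1 - c := by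
    intro i
    have h := hK.conjTranspose_mul_mul_same U
    rw [show Uᴴ = star U from rfl, hUKU] at h
    have h2 := (Matrix.posSemidef_diagonal_iff).mp h i
    have h3 := Complex.zero_le_real.mp h2
    linarith
  -- the core matrix T is PSD
  set r : Fin d → ℝ := fun i => lam * (1 - ev i) - max (ev i) 0 with hrdef
  have hr : ∀ i, 0 ≤ r i := by
    intro i
    have h1 : ev i ≤ 1 - c := hev i
    have hc' : 1 - c = lam / (1 + lam) := by
      rw [hcdef, eq_div_iff hlam1.ne', sub_mul, inv_mul_cancel₀ hlam1.ne', one_mul]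
      ring
    rw [hc', le_div_iff₀ hlam1] at h1
    rcases le_or_gt (ev i) 0 with h | h
    · rw [hrdef]
      simp only [max_eq_right h]
      nlinarith
    · rw [hrdef]
      simp only [max_eq_left h.le]
      nlinarith
  set T : Matrix (Fin d) (Fin d) ℂ := lam • (S * P * S) - matPosPart N with hTdef
  have hd2 : lam • ((1 : Matrix (Fin d) (Fin d) ℂ) - D) - Dp
      = diagonal (fun i => ((r i : ℝ) : ℂ)) := by
    ext i j
    rcases eq_or_ne i j with rfl | h
    · simp [hDdef, hDpdef, hrdef, Matrix.one_apply_eq, Complex.real_smul, Function.comp]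
      try push_cast
      try ring
    · simp [hDdef, hDpdef, Matrix.one_apply_ne h, Matrix.diagonal_apply_ne _ h]
  have hTeq : T = U * diagonal (fun i => ((r i : ℝ) : ℂ)) * star U := by
    rw [hTdef, hSPS, h1N, hpos, ← hd2]
    rw [show U * (lam • (1 - D) - Dp) * star U
        = lam • (U * (1 - D) * star U) - U * Dp * star U from by
      rw [Matrix.mul_sub, Matrix.sub_mul, Matrix.mul_smul, Matrix.smul_mul]]
  have hT : T.PosSemidef := by
    rw [hTeq]
    have hdpsd : (diagonal (fun i => ((r i : ℝ) : ℂ))).PosSemidef :=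
      Matrix.posSemidef_diagonal_iff.mpr fun i => Complex.zero_le_real.mpr (hr i)
    exact hdpsd.mul_mul_conjTranspose_same U
  -- final assembly
  have hfinal : (1 + lam) • P - P' = S⁻¹ * T * S⁻¹ := by
    rw [hP', hTdef, Matrix.mul_sub, Matrix.sub_mul, Matrix.mul_smul, Matrix.smul_mul]
    rw [show S⁻¹ * (S * P * S) * S⁻¹ = (S⁻¹ * S) * P * (S * S⁻¹) by noncomm_ring,
      hSS, hSS', one_mul, mul_one, add_smul, one_smul]
    abel
  rw [hfinal]
  have h := hT.mul_mul_conjTranspose_same (S⁻¹)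
  rwa [hSinv.eq] at h
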